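/- For every non-integer real number x, π·cot(πx) = 1/x + Σ_{n=1}^∞ (1/(x+n) + 1/(x−n)). -/

import Mathlib

open Filter Finset Topology

lemma aux_norm_prod_one_add_sub_one_le {ι : Type*} (s : Finset ι) (a : ι → ℂ) :
    ‖(∏ i ∈ s, (1 + a i)) - 1‖ ≤ (∏ i ∈ s, (1 + ‖a i‖)) - 1 := by
  induction s using Finset.cons_induction with
  | empty => simp
  | cons i s hi ih =>
    rw [Finset.prod_cons, Finset.prod_cons]
    have h1 : (1 + a i) * (∏ j ∈ s, (1 + a j)) - 1
        = (1 + a i) * ((∏ j ∈ s, (1 + a j)) - 1) + a i := by ring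
    have hpos : (1:ℝ) ≤ ∏ j ∈ s, (1 + ‖a j‖) := by
      calc (1:ℝ) = ∏ _j ∈ s, 1 := by simp
        _ ≤ ∏ j ∈ s, (1 + ‖a j‖) :=
          Finset.prod_le_prod (by norm_num) (fun j _ => by linarith [norm_nonneg (a j)])
    calc ‖(1 + a i) * (∏ j ∈ s, (1 + a j)) - 1‖
        ≤ ‖(1 + a i)‖ * ‖(∏ j ∈ s, (1 + a j)) - 1‖ + ‖a i‖ := by
          rw [h1]; exact (norm_add_le _ _).trans (by rw [norm_mul])
      _ ≤ (1 + ‖a i‖) * ((∏ j ∈ s, (1 + ‖a j‖)) - 1) + ‖a i‖ := by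
          have hni : ‖(1:ℂ) + a i‖ ≤ 1 + ‖a i‖ := (norm_add_le _ _).trans (by simp)
          nlinarith [norm_nonneg ((∏ j ∈ s, (1 + a j)) - 1), norm_nonneg (a i),
            norm_nonneg ((1:ℂ) + a i)]
      _ = (1 + ‖a i‖) * (∏ j ∈ s, (1 + ‖a j‖)) - 1 := by ring

lemma aux_prod_one_add_le_exp {ι : Type*} (s : Finset ι) (u : ι → ℝ) (hu : ∀ i, 0 ≤ u i) :
    ∏ i ∈ s, (1 + u i) ≤ Real.exp (∑ i ∈ s, u i) := by
  rw [Real.exp_sum]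
  refine Finset.prod_le_prod (fun i _ => by have := hu i; positivity) (fun i _ => ?_)
  have := Real.add_one_le_exp (u i); linarith

set_option maxHeartbeats 1000000 in
lemma aux_TLU (R : ℝ) (hR : 0 < R) :
    TendstoLocallyUniformlyOn
      (fun (N : ℕ) (z : ℂ) =>
        ↑Real.pi * z * ∏ j ∈ Finset.range N, (1 - z ^ 2 / ((j : ℂ) + 1) ^ 2))
      (fun z => Complex.sin (↑Real.pi * z)) atTop (Metric.ball (0 : ℂ) R) := by
  set u : ℕ → ℝ := fun j => R ^ 2 / ((j : ℝ) + 1) ^ 2 with hu_def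
  have hu_nonneg : ∀ j, 0 ≤ u j := fun j => by positivity
  have hu_sum : Summable u := by
    have h1 : Summable (fun j : ℕ => 1 / ((j : ℝ)) ^ 2) := by
      rw [Real.summable_one_div_nat_pow]; norm_num
    have h2 := (summable_nat_add_iff 1).mpr h1
    have h3 : Summable (fun j : ℕ => 1 / ((j : ℝ) + 1) ^ 2) :=
      h2.congr (fun n => by push_cast; ring)
    simpa [hu_def, div_eq_mul_inv, one_mul] using h3.mul_left (R ^ 2)
  set F : ℕ → ℂ → ℂ := fun N z =>
    ↑Real.pi * z * ∏ j ∈ Finset.range N, (1 - z ^ 2 / ((j : ℂ) + 1) ^ 2) with hF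
  have hub : ∀ z ∈ Metric.closedBall (0 : ℂ) R, ∀ j : ℕ,
      ‖z ^ 2 / ((j : ℂ) + 1) ^ 2‖ ≤ u j := by
    intro z hz j
    have hz' : ‖z‖ ≤ R := by simpa using Metric.mem_closedBall.mp hz
    have h2 : ‖(j : ℂ) + 1‖ = (j : ℝ) + 1 := by
      rw [show ((j : ℂ) + 1) = ((j + 1 : ℕ) : ℂ) by push_cast; ring, Complex.norm_natCast]
      push_cast; ring
    rw [norm_div, norm_pow, norm_pow, h2, hu_def]
    have hsq : ‖z‖ ^ 2 ≤ R ^ 2 := by nlinarith [norm_nonneg z]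
    exact div_le_div₀ (by positivity) hsq (by positivity) le_rfl
  set C0 : ℝ := Real.pi * R * Real.exp (∑' j, u j) with hC0
  have hC0pos : 0 < C0 := by positivity
  have hFb : ∀ z ∈ Metric.closedBall (0 : ℂ) R, ∀ m : ℕ, ‖F m z‖ ≤ C0 := by
    intro z hz m
    have hz' : ‖z‖ ≤ R := by simpa using Metric.mem_closedBall.mp hz
    have h1 : ‖F m z‖ = Real.pi * ‖z‖ *
        ∏ j ∈ Finset.range m, ‖(1 : ℂ) - z ^ 2 / ((j : ℂ) + 1) ^ 2‖ := by
      rw [hF]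
      simp [norm_mul, Complex.norm_real, abs_of_nonneg Real.pi_pos.le, norm_prod]
    rw [h1]
    calc Real.pi * ‖z‖ * ∏ j ∈ Finset.range m, ‖(1 : ℂ) - z ^ 2 / ((j : ℂ) + 1) ^ 2‖
        ≤ Real.pi * R * ∏ j ∈ Finset.range m, (1 + u j) := by
          have hprod : ∏ j ∈ Finset.range m, ‖(1 : ℂ) - z ^ 2 / ((j : ℂ) + 1) ^ 2‖
              ≤ ∏ j ∈ Finset.range m, (1 + u j) :=
            Finset.prod_le_prod (fun j _ => norm_nonneg _)
              (fun j _ => (norm_sub_le _ _).trans (by rw [norm_one]; linarith [hub z hz j]))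
          have h0 : 0 ≤ ∏ j ∈ Finset.range m, ‖(1 : ℂ) - z ^ 2 / ((j : ℂ) + 1) ^ 2‖ :=
            Finset.prod_nonneg fun j _ => norm_nonneg _
          exact mul_le_mul (mul_le_mul_of_nonneg_left hz' Real.pi_pos.le) hprod h0 (by positivity)
      _ ≤ Real.pi * R * Real.exp (∑ j ∈ Finset.range m, u j) :=
          mul_le_mul_of_nonneg_left (aux_prod_one_add_le_exp _ u hu_nonneg) (by positivity)
      _ ≤ C0 := by
          rw [hC0]
          exact mul_le_mul_of_nonneg_left
            (Real.exp_le_exp.mpr (Summable.sum_le_tsum _ (fun j _ => hu_nonneg j) hu_sum)) (by positivity)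
  have hcauchy : UniformCauchySeqOn F atTop (Metric.closedBall (0 : ℂ) R) := by
    rw [Metric.uniformCauchySeqOn_iff]
    intro ε hε
    set C : ℝ := C0 + 1 with hC
    have hCpos : 0 < C := by positivity
    set δ : ℝ := Real.log (1 + ε / (2 * C)) with hδdef
    have hδpos : 0 < δ := by
      have h : 0 < ε / (2 * C) := by positivity
      exact Real.log_pos (by linarith)
    obtain ⟨N, hN⟩ : ∃ N : ℕ, ∑' j, u j - ∑ j ∈ Finset.range N, u j < δ := by
      have ht := hu_sum.hasSum.tendsto_sum_nat
      obtain ⟨N, hN⟩ := (Metric.tendsto_atTop.mp ht) δ hδpos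
      refine ⟨N, ?_⟩
      have := hN N le_rfl
      rw [Real.dist_eq, abs_lt] at this
      linarith [this.1]
    have key : ∀ m n : ℕ, N ≤ m → m ≤ n → ∀ z ∈ Metric.closedBall (0 : ℂ) R,
        dist (F m z) (F n z) < ε := by
      intro m n hNm hmn z hz
      have hsplit : F n z - F m z = F m z *
          ((∏ j ∈ Finset.Ico m n, (1 + -(z ^ 2 / ((j : ℂ) + 1) ^ 2))) - 1) := by
        simp only [hF, sub_eq_add_neg]
        rw [← Finset.prod_range_mul_prod_Ico
          (fun j : ℕ => (1 : ℂ) + -(z ^ 2 / ((j : ℂ) + 1) ^ 2)) hmn]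
        ring
      have hP1 : ‖(∏ j ∈ Finset.Ico m n, (1 + -(z ^ 2 / ((j : ℂ) + 1) ^ 2))) - 1‖ ≤
          Real.exp δ - 1 := by
        calc ‖(∏ j ∈ Finset.Ico m n, (1 + -(z ^ 2 / ((j : ℂ) + 1) ^ 2))) - 1‖
            ≤ (∏ j ∈ Finset.Ico m n, (1 + ‖-(z ^ 2 / ((j : ℂ) + 1) ^ 2)‖)) - 1 :=
              aux_norm_prod_one_add_sub_one_le _ _
          _ ≤ (∏ j ∈ Finset.Ico m n, (1 + u j)) - 1 := by
              have : ∏ j ∈ Finset.Ico m n, (1 + ‖-(z ^ 2 / ((j : ℂ) + 1) ^ 2)‖)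
                  ≤ ∏ j ∈ Finset.Ico m n, (1 + u j) :=
                Finset.prod_le_prod (fun j _ => by positivity)
                  (fun j _ => by rw [norm_neg]; linarith [hub z hz j])
              linarith
          _ ≤ Real.exp (∑ j ∈ Finset.Ico m n, u j) - 1 := by
              linarith [aux_prod_one_add_le_exp (Finset.Ico m n) u hu_nonneg]
          _ ≤ Real.exp δ - 1 := by
              have hsum : ∑ j ∈ Finset.range m, u j + ∑ j ∈ Finset.Ico m n, u j
                  = ∑ j ∈ Finset.range n, u j := Finset.sum_range_add_sum_Ico u hmn
              have h1 : ∑ j ∈ Finset.range n, u j ≤ ∑' j, u j :=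
                Summable.sum_le_tsum _ (fun j _ => hu_nonneg j) hu_sum
              have h2 : ∑ j ∈ Finset.range N, u j ≤ ∑ j ∈ Finset.range m, u j :=
                Finset.sum_le_sum_of_subset_of_nonneg
                  (Finset.range_subset_range.mpr hNm) (fun j _ _ => hu_nonneg j)
              have h3 : ∑ j ∈ Finset.Ico m n, u j ≤ δ := by linarith
              linarith [Real.exp_le_exp.mpr h3]
      rw [dist_eq_norm, ← norm_sub_rev, hsplit, norm_mul]
      have hexp : Real.exp δ - 1 = ε / (2 * C) := by
        rw [hδdef, Real.exp_log (by positivity)]; ring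
      calc ‖F m z‖ * ‖(∏ j ∈ Finset.Ico m n, (1 + -(z ^ 2 / ((j : ℂ) + 1) ^ 2))) - 1‖
          ≤ C0 * (Real.exp δ - 1) :=
            mul_le_mul (hFb z hz m) hP1 (norm_nonneg _) hC0pos.le
        _ = C0 * (ε / (2 * C)) := by rw [hexp]
        _ < ε := by
            rw [hC]
            have h1 : C0 / (2 * (C0 + 1)) < 1 := by
              rw [div_lt_one (by positivity)]; linarith
            calc C0 * (ε / (2 * (C0 + 1))) = (C0 / (2 * (C0 + 1))) * ε := by ring
              _ < 1 * ε := mul_lt_mul_of_pos_right h1 hε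
              _ = ε := one_mul ε
    refine ⟨N, fun m hm n hn z hz => ?_⟩
    rcases le_total m n with h | h
    · exact key m n hm h z hz
    · rw [dist_comm]; exact key n m hn h z hz
  have hTU : TendstoUniformlyOn F (fun z => Complex.sin (↑Real.pi * z)) atTop
      (Metric.closedBall (0 : ℂ) R) :=
    hcauchy.tendstoUniformlyOn_of_tendsto (fun z _ => Complex.tendsto_euler_sin_prod z)
  exact hTU.tendstoLocallyUniformlyOn.mono Metric.ball_subset_closedBall

set_option maxHeartbeats 1000000 in
theorem stmt_0 (x : ℝ) (hx : ∀ k : ℤ, x ≠ (k : ℝ)) :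
    Real.pi * Real.cot (Real.pi * x) =
      1 / x + ∑' n : ℕ, (1 / (x + ((n : ℝ) + 1)) + 1 / (x - ((n : ℝ) + 1))) := by
  have hx0 : x ≠ 0 := fun h => hx 0 (by simp [h])
  have hpm : ∀ n : ℕ, x + ((n : ℝ) + 1) ≠ 0 := fun n h =>
    hx (-(n + 1)) (by push_cast; linarith)
  have hmm : ∀ n : ℕ, x - ((n : ℝ) + 1) ≠ 0 := fun n h =>
    hx (n + 1) (by push_cast; linarith)
  set R : ℝ := |x| + 1 with hR
  have hRpos : 0 < R := by positivity
  have hxball : (x : ℂ) ∈ Metric.ball (0 : ℂ) R := by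
    simp only [Metric.mem_ball, dist_zero_right, Complex.norm_real, Real.norm_eq_abs, hR]
    linarith
  have hsin : Complex.sin (↑Real.pi * (x : ℂ)) ≠ 0 := by
    rw [Complex.sin_ne_zero_iff]
    intro k hk
    apply hx k
    have h2 : ((Real.pi * x : ℝ) : ℂ) = (((k : ℝ) * Real.pi : ℝ) : ℂ) := by
      push_cast; exact hk
    have h3 : Real.pi * x = (k : ℝ) * Real.pi := Complex.ofReal_injective h2
    have h4 : x * Real.pi = (k : ℝ) * Real.pi := by linarith [mul_comm Real.pi x]
    exact mul_right_cancel₀ Real.pi_ne_zero h4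
  -- the sequence of log derivatives converges
  have hdiff : ∀ N : ℕ, DifferentiableOn ℂ
      (fun z : ℂ => ↑Real.pi * z * ∏ j ∈ Finset.range N, (1 - z ^ 2 / ((j : ℂ) + 1) ^ 2))
      (Metric.ball (0 : ℂ) R) := by
    intro N
    apply Differentiable.differentiableOn
    apply Differentiable.mul
    · exact (differentiable_id.const_mul _)
    · apply Differentiable.fun_finsetProd
      intro j _
      exact (differentiable_const _).sub ((differentiable_pow 2).div_const _)
  have hlog := Complex.logDeriv_tendsto Metric.isOpen_ball
    hxball
    (aux_TLU R hRpos) (Eventually.of_forall hdiff) hsin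
  -- identify the limit
  have hlg : logDeriv (fun z : ℂ => Complex.sin (↑Real.pi * z)) ↑x
      = ((Real.pi * Real.cot (Real.pi * x) : ℝ) : ℂ) := by
    have hcomp : (fun z : ℂ => Complex.sin (↑Real.pi * z))
        = Complex.sin ∘ (fun z : ℂ => ↑Real.pi * z) := rfl
    rw [hcomp, logDeriv_comp (Complex.differentiable_sin _) (by fun_prop),
      Complex.logDeriv_sin, deriv_const_mul _ differentiable_id.differentiableAt, deriv_id'']
    rw [Complex.cot_eq_cos_div_sin, Real.cot_eq_cos_div_sin]
    push_cast
    ring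
  -- identify the terms
  have hld : ∀ N : ℕ, logDeriv
      (fun z : ℂ => ↑Real.pi * z * ∏ j ∈ Finset.range N, (1 - z ^ 2 / ((j : ℂ) + 1) ^ 2)) ↑x
      = ((1 / x + ∑ j ∈ Finset.range N,
          (1 / (x + ((j : ℝ) + 1)) + 1 / (x - ((j : ℝ) + 1))) : ℝ) : ℂ) := by
    intro N
    have hfx : ∀ j : ℕ, ((1 : ℂ) - (x : ℂ) ^ 2 / ((j : ℂ) + 1) ^ 2) ≠ 0 := by
      intro j
      have hj1 : ((j : ℝ) + 1) ≠ 0 := by positivity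
      have : ((1 : ℂ) - (x : ℂ) ^ 2 / ((j : ℂ) + 1) ^ 2)
          = (((1 : ℝ) - x ^ 2 / ((j : ℝ) + 1) ^ 2 : ℝ) : ℂ) := by push_cast; ring
      rw [this]
      rw [Complex.ofReal_ne_zero]
      have h2 : (1 : ℝ) - x ^ 2 / ((j : ℝ) + 1) ^ 2
          = (x + ((j : ℝ) + 1)) * -(x - ((j : ℝ) + 1)) / ((j : ℝ) + 1) ^ 2 := by
        field_simp; ring
      rw [h2]
      exact div_ne_zero (mul_ne_zero (hpm j) (neg_ne_zero.mpr (hmm j))) (by positivity)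
    have hdfx : ∀ j : ℕ, DifferentiableAt ℂ
        (fun z : ℂ => (1 : ℂ) - z ^ 2 / ((j : ℂ) + 1) ^ 2) ↑x := by
      intro j
      exact ((differentiable_const _).sub ((differentiable_pow 2).div_const _)).differentiableAt
    have h1 : logDeriv (fun z : ℂ =>
          ↑Real.pi * z * ∏ j ∈ Finset.range N, (1 - z ^ 2 / ((j : ℂ) + 1) ^ 2)) ↑x
        = logDeriv (fun z : ℂ => ↑Real.pi * z) ↑x
          + logDeriv (fun z : ℂ =>
              ∏ j ∈ Finset.range N, (1 - z ^ 2 / ((j : ℂ) + 1) ^ 2)) ↑x :=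
      logDeriv_mul (f := fun z : ℂ => ↑Real.pi * z)
        (g := fun z : ℂ => ∏ j ∈ Finset.range N, (1 - z ^ 2 / ((j : ℂ) + 1) ^ 2)) (↑x)
        (mul_ne_zero (Complex.ofReal_ne_zero.mpr Real.pi_ne_zero)
          (Complex.ofReal_ne_zero.mpr hx0))
        (Finset.prod_ne_zero_iff.mpr fun j _ => hfx j)
        ((differentiable_id.const_mul _).differentiableAt)
        (DifferentiableAt.fun_finsetProd fun j _ => hdfx j)
    have h2 := logDeriv_prod (s := Finset.range N)
      (f := fun (j : ℕ) (z : ℂ) => (1 : ℂ) - z ^ 2 / ((j : ℂ) + 1) ^ 2) (x := ↑x)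
      (fun j _ => hfx j) (fun j _ => hdfx j)
    have h3 : logDeriv (fun z : ℂ => ↑Real.pi * z) ↑x = 1 / (x : ℂ) := by
      rw [logDeriv_const_mul (f := fun z : ℂ => z) _ _
        (Complex.ofReal_ne_zero.mpr Real.pi_ne_zero)]
      exact logDeriv_id' _
    rw [h1, h2, h3]
    have hfac : ∀ j : ℕ, logDeriv (fun z : ℂ => (1 : ℂ) - z ^ 2 / ((j : ℂ) + 1) ^ 2) ↑x
        = ((1 / (x + ((j : ℝ) + 1)) + 1 / (x - ((j : ℝ) + 1)) : ℝ) : ℂ) := by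
      intro j
      have hj0 : ((j : ℂ) + 1) ≠ 0 := Nat.cast_add_one_ne_zero j
      have hd : deriv (fun z : ℂ => (1 : ℂ) - z ^ 2 / ((j : ℂ) + 1) ^ 2) ↑x
          = -(2 * (x : ℂ) / ((j : ℂ) + 1) ^ 2) := by
        have h := (((hasDerivAt_pow 2 ((x : ℂ))).div_const (((j : ℂ) + 1) ^ 2)).const_sub 1)
        have h2 := h.deriv
        rw [h2]; push_cast; ring
      have hcp : ((x : ℂ) + ((j : ℂ) + 1)) ≠ 0 := by
        have : ((x : ℂ) + ((j : ℂ) + 1)) = ((x + ((j : ℝ) + 1) : ℝ) : ℂ) := by push_cast; ring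
        rw [this, Complex.ofReal_ne_zero]; exact hpm j
      have hcm : ((x : ℂ) - ((j : ℂ) + 1)) ≠ 0 := by
        have : ((x : ℂ) - ((j : ℂ) + 1)) = ((x - ((j : ℝ) + 1) : ℝ) : ℂ) := by push_cast; ring
        rw [this, Complex.ofReal_ne_zero]; exact hmm j
      rw [logDeriv_apply, hd]
      have hcm' : (((j : ℂ) + 1) - (x : ℂ)) ≠ 0 := fun h => hcm (by
        rw [sub_eq_zero] at h ⊢; exact h.symm)
      have hrw : (1 : ℂ) - (x : ℂ) ^ 2 / ((j : ℂ) + 1) ^ 2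
          = (((x : ℂ) + ((j : ℂ) + 1)) * (((j : ℂ) + 1) - (x : ℂ))) / ((j : ℂ) + 1) ^ 2 := by
        field_simp; ring
      rw [hrw]
      push_cast
      field_simp
      ring
    have h4 : ∑ i ∈ Finset.range N,
        logDeriv ((fun (j : ℕ) (z : ℂ) => (1 : ℂ) - z ^ 2 / ((j : ℂ) + 1) ^ 2) i) ↑x
        = ∑ i ∈ Finset.range N,
          ((1 / (x + ((i : ℝ) + 1)) + 1 / (x - ((i : ℝ) + 1)) : ℝ) : ℂ) :=
      Finset.sum_congr rfl (fun j _ => hfac j)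
    rw [h4]
    push_cast
    ring
  -- convert to a real limit
  rw [hlg] at hlog
  simp only [hld] at hlog
  have hreal : Tendsto (fun N : ℕ => 1 / x + ∑ j ∈ Finset.range N,
      (1 / (x + ((j : ℝ) + 1)) + 1 / (x - ((j : ℝ) + 1)))) atTop
      (𝓝 (Real.pi * Real.cot (Real.pi * x))) := by
    have h2 := (Complex.continuous_re.tendsto _).comp hlog
    simp only [Function.comp_def, Complex.ofReal_re] at h2
    exact h2
  -- summability of the series
  have hsummable : Summable (fun n : ℕ => 1 / (x + ((n : ℝ) + 1)) + 1 / (x - ((n : ℝ) + 1))) := by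
    have hg : Summable (fun n : ℕ => (8 * |x| / 3 + 1) * (1 / ((n : ℝ) + 1) ^ 2)) := by
      have h1 : Summable (fun j : ℕ => 1 / ((j : ℝ)) ^ 2) := by
        rw [Real.summable_one_div_nat_pow]; norm_num
      have h2 := (summable_nat_add_iff 1).mpr h1
      exact (h2.congr (fun n => by push_cast; ring)).mul_left _
    apply Summable.of_norm_bounded_eventually_nat hg
    filter_upwards [eventually_ge_atTop (⌈2 * |x|⌉₊)] with n hn
    set c : ℝ := (n : ℝ) + 1 with hc
    have hc0 : 0 < c := by positivity
    have hcb : 2 * |x| ≤ c := by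
      have := Nat.ceil_le.mp (le_refl (⌈2 * |x|⌉₊))
      calc 2 * |x| ≤ (⌈2 * |x|⌉₊ : ℝ) := Nat.le_ceil _
        _ ≤ (n : ℝ) := by exact_mod_cast hn
        _ ≤ c := by rw [hc]; linarith
    have hx2 : x ^ 2 ≤ c ^ 2 / 4 := by nlinarith [abs_nonneg x, sq_abs x]
    have h3 : (3 / 4) * c ^ 2 ≤ c ^ 2 - x ^ 2 := by nlinarith
    have hwn : 1 / (x + c) + 1 / (x - c) = 2 * x / (x ^ 2 - c ^ 2) := by
      have h5 : x ^ 2 - c ^ 2 = (x + c) * (x - c) := by ring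
      rw [div_add_div _ _ (hpm n) (hmm n), h5]
      congr 1
      ring
    rw [Real.norm_eq_abs, hwn, abs_div]
    have habs : |x ^ 2 - c ^ 2| = c ^ 2 - x ^ 2 := by
      rw [abs_sub_comm, abs_of_nonneg]; nlinarith
    rw [habs, abs_mul]
    have h4 : |(2 : ℝ)| * |x| / (c ^ 2 - x ^ 2) ≤ (8 * |x| / 3 + 1) * (1 / c ^ 2) := by
      rw [abs_two, mul_one_div, div_le_div_iff₀ (by nlinarith) (by positivity)]
      nlinarith [abs_nonneg x, sq_nonneg x]
    exact h4
  -- conclude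
  have hlim := hsummable.hasSum.tendsto_sum_nat
  have hfinal : Tendsto (fun N : ℕ => 1 / x + ∑ j ∈ Finset.range N,
      (1 / (x + ((j : ℝ) + 1)) + 1 / (x - ((j : ℝ) + 1)))) atTop
      (𝓝 (1 / x + ∑' n : ℕ, (1 / (x + ((n : ℝ) + 1)) + 1 / (x - ((n : ℝ) + 1))))) :=
    hlim.const_add (1 / x)
  exact tendsto_nhds_unique hreal hfinal
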